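/- For every rational complex number z ∈ ℚ(i), the Hurwitz continued fraction algorithm terminates in finitely many steps: there exists an index m such that the iterate z_m equals its nearest Gaussian integer a_m (equivalently, the algorithm produces a finite expansion [a₀; a₁, …, a_m]). -/

import Mathlib

/-- For every rational complex number `z ∈ ℚ(i)`, the Hurwitz continued fraction algorithm
terminates in finitely many steps: if `zseq` is the iteration sequence and `a` the partial
quotients (so `zseq 0 = z`, `a n` is a nearest Gaussian integer to `zseq n`, and
`zseq (n+1) = (zseq n − a n)⁻¹` whenever `zseq n ≠ a n`), then there exists an index `m`
with `zseq m = a m`. -/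
theorem hurwitz_terminates_on_rationals
    (z : ℂ) (hrat : ∃ u v : ℚ, z = (u : ℂ) + (v : ℂ) * Complex.I)
    (zseq : ℕ → ℂ) (a : ℕ → GaussianInt)
    (hz0 : zseq 0 = z)
    (hnear : ∀ n, |(zseq n - (a n : ℂ)).re| ≤ 1 / 2 ∧ |(zseq n - (a n : ℂ)).im| ≤ 1 / 2)
    (hiter : ∀ n, zseq n ≠ (a n : ℂ) → zseq (n + 1) = (zseq n - (a n : ℂ))⁻¹) :
    ∃ m : ℕ, zseq m = (a m : ℂ) := by
  have key : ∀ N : ℕ, ∀ n : ℕ, ∀ p q : GaussianInt, q ≠ 0 → q.norm.natAbs ≤ N →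
      zseq n = (p : ℂ) / (q : ℂ) → ∃ m, zseq m = (a m : ℂ) := by
    intro N
    induction N using Nat.strong_induction_on with
    | _ N ih =>
      intro n p q hq hqN hzn
      by_cases h : zseq n = (a n : ℂ)
      · exact ⟨n, h⟩
      · set r : GaussianInt := p - a n * q with hr
        have hqC : (q : ℂ) ≠ 0 := by simpa using hq
        have hsub : zseq n - (a n : ℂ) = (r : ℂ) / (q : ℂ) := by
          rw [hzn, hr, GaussianInt.toComplex_sub, GaussianInt.toComplex_mul]
          field_simp
        have hrC : (r : ℂ) ≠ 0 := by
          intro h0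
          apply h
          have := hsub
          rw [h0, zero_div, sub_eq_zero] at this
          exact this
        have hr0 : r ≠ 0 := fun h0 => hrC (by simp [h0])
        -- norm decreases
        have hb := hnear n
        have hns : Complex.normSq (zseq n - (a n : ℂ)) ≤ 1 / 2 := by
          have h1 : (zseq n - (a n : ℂ)).re ^ 2 ≤ (1/2)^2 := by
            have := sq_le_sq' (neg_le_of_abs_le hb.1) (le_of_abs_le hb.1)
            simpa using this
          have h2 : (zseq n - (a n : ℂ)).im ^ 2 ≤ (1/2)^2 := by
            have := sq_le_sq' (neg_le_of_abs_le hb.2) (le_of_abs_le hb.2)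
            simpa using this
          rw [Complex.normSq_apply]
          nlinarith
        have hlt : Complex.normSq (r : ℂ) < Complex.normSq (q : ℂ) := by
          rw [hsub, Complex.normSq_div] at hns
          have hq' : 0 < Complex.normSq (q : ℂ) := Complex.normSq_pos.mpr hqC
          have hr' : 0 < Complex.normSq (r : ℂ) := Complex.normSq_pos.mpr hrC
          rw [div_le_iff₀ hq'] at hns
          nlinarith
        have hnormlt : r.norm.natAbs < q.norm.natAbs := by
          have : r.norm < q.norm := by
            have := hlt
            rw [← GaussianInt.intCast_real_norm, ← GaussianInt.intCast_real_norm] at this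
            exact_mod_cast this
          have h0 := r.norm_nonneg
          omega
        have hstep : zseq (n + 1) = (q : ℂ) / (r : ℂ) := by
          rw [hiter n h, hsub, inv_div]
        exact ih r.norm.natAbs (lt_of_lt_of_le hnormlt hqN) (n+1) q r hr0 le_rfl hstep
  obtain ⟨u, v, hz⟩ := hrat
  set p : GaussianInt := ⟨u.num * (v.den : ℤ), v.num * (u.den : ℤ)⟩ with hp
  set q : GaussianInt := ⟨(u.den : ℤ) * (v.den : ℤ), 0⟩ with hq
  have hq0 : q ≠ 0 := by
    simp [hq, Zsqrtd.ext_iff, u.den_nz, v.den_nz]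
  refine key q.norm.natAbs 0 p q hq0 le_rfl ?_
  rw [hz0, hz, GaussianInt.toComplex_def', GaussianInt.toComplex_def']
  have hu : (u : ℂ) = (u.num : ℂ) / (u.den : ℂ) := by rw [Rat.cast_def]
  have hv : (v : ℂ) = (v.num : ℂ) / (v.den : ℂ) := by rw [Rat.cast_def]
  have hud : ((u.den : ℤ) : ℂ) ≠ 0 := by exact_mod_cast u.den_nz
  have hvd : ((v.den : ℤ) : ℂ) ≠ 0 := by exact_mod_cast v.den_nz
  rw [hu, hv]
  push_cast
  field_simp
  ring
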